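/- arXiv:0906.1696 — 4 statements merged into one kernel-verified Lean document; each statement's English description precedes it below -/
import Mathlib

section
/- Let R₀ be a commutative Noetherian ring, let R = ⊕_{j≥0} R_j be a commutative graded ring which is a finitely generated graded R₀-algebra whose degree-zero part is R₀, and let I = ⊕_{j≥1} R_j be its irrelevant ideal. Let M = ⊕_{j≥0} M_j be a graded R-module generated as an R-module by a (possibly infinite) set of homogeneous elements whose degrees are bounded by some integer N. Then the I-adic filtration and the filtration by grading define the same topology on M: for every i ≥ 0 one has I^i·M ⊆ M^i, and for every n ≥ 1 there exists i₀ such that M^i ⊆ I^n·M for all i ≥ i₀, where M^i = ⊕_{j≥i} M_j. Consequently, the canonical map θ_M from the I-adic completion of M to the graded completion lim_i M/M^i is an isomorphism. -/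
set_option linter.unusedSectionVars false

open DirectSum

section

variable (R₀ : Type*) [CommRing R₀]
variable {R : Type*} [CommRing R] [Algebra R₀ R]
variable (𝒜 : ℕ → Submodule R₀ R) [GradedAlgebra 𝒜]
variable {M : Type*} [AddCommGroup M] [Module R₀ M] [Module R M] [IsScalarTower R₀ R M]
variable (ℳ : ℕ → Submodule R₀ M) [DirectSum.Decomposition ℳ] [SetLike.GradedSMul 𝒜 ℳ]

/-- The filtration of a graded module by grading: `M^i = ⊕_{j ≥ i} M_j`. -/
def gradeFilt (i : ℕ) : Submodule R₀ M :=
  ⨆ j, ⨆ _ : i ≤ j, ℳ j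

lemma mem_gradeFilt_of_mem {k i : ℕ} (h : i ≤ k) {m : M} (hm : m ∈ ℳ k) :
    m ∈ gradeFilt R₀ ℳ i :=
  (le_iSup₂_of_le k h le_rfl : ℳ k ≤ gradeFilt R₀ ℳ i) hm

lemma gradeFilt_antitone {i j : ℕ} (h : i ≤ j) :
    gradeFilt R₀ ℳ j ≤ gradeFilt R₀ ℳ i :=
  iSup₂_le fun k hk => le_iSup₂_of_le k (h.trans hk) le_rfl

lemma gradeFilt_zero_eq_top : gradeFilt R₀ ℳ 0 = ⊤ := by
  classical
  rw [eq_top_iff]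
  intro m _
  rw [← DirectSum.sum_support_decompose ℳ m]
  exact Submodule.sum_mem _ fun k _ => mem_gradeFilt_of_mem R₀ ℳ (Nat.zero_le k) (SetLike.coe_mem _)

lemma irrelevant_smul_gradeFilt {r : R} (hr : r ∈ (HomogeneousIdeal.irrelevant 𝒜).toIdeal)
    {i : ℕ} {m : M} (hm : m ∈ gradeFilt R₀ ℳ i) :
    r • m ∈ gradeFilt R₀ ℳ (i + 1) := by
  classical
  refine Submodule.iSup_induction (motive := fun m => r • m ∈ gradeFilt R₀ ℳ (i + 1)) _ hm ?_ ?_ ?_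
  · intro j x hx
    by_cases hij : i ≤ j
    · rw [iSup_pos hij] at hx
      have hsum : r • x = ∑ d ∈ (DirectSum.decompose 𝒜 r).support,
          ((DirectSum.decompose 𝒜 r d : R) • x) := by
        conv_lhs => rw [← DirectSum.sum_support_decompose 𝒜 r]
        rw [Finset.sum_smul]
      rw [hsum]
      refine Submodule.sum_mem _ fun d hd => ?_
      have hd0 : d ≠ 0 := by
        intro h0
        subst h0
        have hz : (DirectSum.decompose 𝒜 r 0 : R) = 0 := by
          have := (HomogeneousIdeal.mem_irrelevant_iff 𝒜 r).mp hr
          rwa [GradedRing.proj_apply] at this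
        exact (DFinsupp.mem_support_iff.mp hd) (by exact_mod_cast Subtype.ext hz)
      have hmem : (DirectSum.decompose 𝒜 r d : R) • x ∈ ℳ (d + j) := by
        have := SetLike.GradedSMul.smul_mem (A := 𝒜) (B := ℳ)
          (SetLike.coe_mem (DirectSum.decompose 𝒜 r d)) hx
        simpa [vadd_eq_add] using this
      exact mem_gradeFilt_of_mem R₀ ℳ (by omega) hmem
    · rw [iSup_neg hij] at hx
      simp only [Submodule.mem_bot] at hx
      subst hx
      show r • (0 : M) ∈ gradeFilt R₀ ℳ (i + 1)
      rw [smul_zero]; exact Submodule.zero_mem _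
  · show r • (0 : M) ∈ gradeFilt R₀ ℳ (i + 1)
    rw [smul_zero]; exact Submodule.zero_mem _
  · intro x y hx hy
    show r • (x + y) ∈ gradeFilt R₀ ℳ (i + 1)
    rw [smul_add]; exact Submodule.add_mem _ hx hy

lemma pow_irrelevant_smul_le_gradeFilt (i : ℕ) :
    ∀ x ∈ ((HomogeneousIdeal.irrelevant 𝒜).toIdeal ^ i • (⊤ : Submodule R M)),
      x ∈ gradeFilt R₀ ℳ i := by
  induction i with
  | zero =>
    intro x _
    rw [gradeFilt_zero_eq_top R₀ ℳ]
    exact Submodule.mem_top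
  | succ i ih =>
    intro x hx
    rw [pow_succ', mul_smul] at hx
    exact Submodule.smul_induction_on hx
      (fun r hr y hy => irrelevant_smul_gradeFilt R₀ 𝒜 ℳ hr (ih y hy))
      (fun a b ha hb => Submodule.add_mem _ ha hb)

variable (M) in
/-- The `I`-adic filtration of `M`, viewed as a filtration by `R₀`-submodules. -/
def adicFilt (I : Ideal R) (i : ℕ) : Submodule R₀ M :=
  (I ^ i • (⊤ : Submodule R M)).restrictScalars R₀

lemma adicFilt_antitone (I : Ideal R) {i j : ℕ} (h : i ≤ j) :
    adicFilt R₀ M I j ≤ adicFilt R₀ M I i := fun x hx =>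
  Submodule.smul_mono_left (Ideal.pow_le_pow_right h) hx

lemma le_comap_id_of_le {p q : Submodule R₀ M} (h : p ≤ q) :
    p ≤ q.comap (LinearMap.id : M →ₗ[R₀] M) := by
  simpa [Submodule.comap_id] using h

/-- The completion of `M` with respect to a decreasing filtration `F` by submodules,
realized as the set (inverse limit) of compatible families in `∏ i, M ⧸ F i`. -/
def filtCompletionSet (F : ℕ → Submodule R₀ M) (hF : ∀ {i j : ℕ}, i ≤ j → F j ≤ F i) :
    Set (∀ i, M ⧸ F i) :=
  {x | ∀ i j : ℕ, ∀ h : i ≤ j,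
    Submodule.mapQ (F j) (F i) LinearMap.id (le_comap_id_of_le R₀ (hF h)) (x j) = x i}

/-- The canonical map `θ_M` from the `I`-adic completion of `M` (for `I` the irrelevant
ideal) to the graded completion, induced by the containments `I^i·M ⊆ M^i`. -/
noncomputable def thetaMap :
    (∀ i, M ⧸ adicFilt R₀ M ((HomogeneousIdeal.irrelevant 𝒜).toIdeal) i) →
      ∀ i, M ⧸ gradeFilt R₀ ℳ i :=
  fun x i => Submodule.mapQ _ _ LinearMap.id
    (le_comap_id_of_le R₀ fun m hm => pow_irrelevant_smul_le_gradeFilt R₀ 𝒜 ℳ i m hm) (x i)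

end

section AuxLemmas

variable (R₀ : Type*) [CommRing R₀]
variable {R : Type*} [CommRing R] [Algebra R₀ R]
variable (𝒜 : ℕ → Submodule R₀ R) [GradedAlgebra 𝒜]
variable {M : Type*} [AddCommGroup M] [Module R₀ M] [Module R M] [IsScalarTower R₀ R M]
variable (ℳ : ℕ → Submodule R₀ M) [DirectSum.Decomposition ℳ] [SetLike.GradedSMul 𝒜 ℳ]

lemma thetaMap_apply' (x : ∀ i, M ⧸ adicFilt R₀ M ((HomogeneousIdeal.irrelevant 𝒜).toIdeal) i)
    (i : ℕ) :
    thetaMap R₀ 𝒜 ℳ x i = Submodule.mapQ _ _ LinearMap.id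
      (le_comap_id_of_le R₀ fun m hm => pow_irrelevant_smul_le_gradeFilt R₀ 𝒜 ℳ i m hm) (x i) :=
  rfl

lemma aux_decompose_smul_of_le {a : R} {d j : ℕ} {s : M} (hs : s ∈ ℳ d) (h : d ≤ j) :
    (DirectSum.decompose ℳ (a • s) j : M) = (DirectSum.decompose 𝒜 a (j - d) : R) • s := by
  classical
  have key : ∀ e ∈ (DirectSum.decompose 𝒜 a).support,
      (DirectSum.decompose ℳ ((DirectSum.decompose 𝒜 a e : R) • s) j : M)
        = if e = j - d then (DirectSum.decompose 𝒜 a e : R) • s else 0 := by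
    intro e _
    have hmem : (DirectSum.decompose 𝒜 a e : R) • s ∈ ℳ (e + d) := by
      simpa [vadd_eq_add] using SetLike.GradedSMul.smul_mem
        (SetLike.coe_mem (DirectSum.decompose 𝒜 a e)) hs
    by_cases hej : e = j - d
    · subst hej
      rw [if_pos rfl]
      exact DirectSum.decompose_of_mem_same ℳ (by rwa [Nat.sub_add_cancel h] at hmem)
    · rw [if_neg hej]
      exact DirectSum.decompose_of_mem_ne ℳ hmem (by omega)
  calc (DirectSum.decompose ℳ (a • s) j : M)
      = (DirectSum.decompose ℳ
          ((∑ e ∈ (DirectSum.decompose 𝒜 a).support, (DirectSum.decompose 𝒜 a e : R)) • s) j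
            : M) := by
        rw [DirectSum.sum_support_decompose 𝒜 a]
    _ = ∑ e ∈ (DirectSum.decompose 𝒜 a).support,
          (DirectSum.decompose ℳ ((DirectSum.decompose 𝒜 a e : R) • s) j : M) := by
        rw [Finset.sum_smul, DirectSum.decompose_sum, DFinsupp.finset_sum_apply,
          AddSubmonoidClass.coe_finset_sum]
    _ = ∑ e ∈ (DirectSum.decompose 𝒜 a).support,
          (if e = j - d then (DirectSum.decompose 𝒜 a e : R) • s else 0) :=
        Finset.sum_congr rfl key
    _ = if j - d ∈ (DirectSum.decompose 𝒜 a).support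
          then (DirectSum.decompose 𝒜 a (j - d) : R) • s else 0 :=
        Finset.sum_ite_eq' _ _ _
    _ = (DirectSum.decompose 𝒜 a (j - d) : R) • s := by
        split_ifs with hmem
        · rfl
        · rw [DFinsupp.notMem_support_iff.mp hmem]
          simp

lemma aux_exists_D (hfg : Algebra.FiniteType R₀ R) [IsNoetherianRing R₀] :
    ∃ D : ℕ, 1 ≤ D ∧ ∀ n j : ℕ, n * D ≤ j → ∀ x ∈ 𝒜 j,
      x ∈ (HomogeneousIdeal.irrelevant 𝒜).toIdeal ^ n := by
  classical
  haveI := hfg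
  haveI : IsNoetherianRing R := Algebra.FiniteType.isNoetherianRing R₀ R
  set I := (HomogeneousIdeal.irrelevant 𝒜).toIdeal with hIdef
  obtain ⟨T, hT⟩ : I.FG := IsNoetherian.noetherian I
  set F : Finset R := T.biUnion (fun t =>
    (DirectSum.decompose 𝒜 t).support.image (fun e => (DirectSum.decompose 𝒜 t e : R)))
    with hFdef
  have hFhom : ∀ f ∈ F, ∃ e, f ∈ 𝒜 e := by
    intro f hf
    simp only [hFdef, Finset.mem_biUnion, Finset.mem_image] at hf
    obtain ⟨t, -, e, -, rfl⟩ := hf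
    exact ⟨e, SetLike.coe_mem _⟩
  have hFI : ∀ f ∈ F, f ∈ I := by
    intro f hf
    simp only [hFdef, Finset.mem_biUnion, Finset.mem_image] at hf
    obtain ⟨t, htT, e, -, rfl⟩ := hf
    have htI : t ∈ I := by
      rw [← hT]
      exact Ideal.subset_span htT
    exact (HomogeneousIdeal.irrelevant 𝒜).isHomogeneous e htI
  have hspanF : I ≤ Ideal.span (F : Set R) := by
    rw [← hT]
    refine Ideal.span_le.mpr fun t htT => ?_
    rw [SetLike.mem_coe, ← DirectSum.sum_support_decompose 𝒜 t]
    refine Ideal.sum_mem _ fun e he => Ideal.subset_span ?_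
    rw [Finset.mem_coe, hFdef, Finset.mem_biUnion]
    exact ⟨t, htT, Finset.mem_image_of_mem _ he⟩
  set deg : R → ℕ := fun f => if h : ∃ e, f ∈ 𝒜 e then h.choose else 0 with hdegdef
  have hdeg : ∀ f ∈ F, f ∈ 𝒜 (deg f) := by
    intro f hf
    have h := hFhom f hf
    simp only [hdegdef, dif_pos h]
    exact h.choose_spec
  refine ⟨1 + F.sup deg, Nat.le_add_right 1 _, ?_⟩
  set D := 1 + F.sup deg with hDdef
  intro n
  induction n with
  | zero =>
    intro j _ x _
    rw [pow_zero, Ideal.one_eq_top]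
    trivial
  | succ n ih =>
    intro j hj x hx
    have hD1 : 1 ≤ D := Nat.le_add_right 1 _
    have hmul : (n + 1) * D = n * D + D := by ring
    have hj1 : 1 ≤ j := by omega
    have hxI : x ∈ I := by
      rw [hIdef]
      refine (HomogeneousIdeal.mem_irrelevant_iff 𝒜 x).mpr ?_
      rw [GradedRing.proj_apply]
      exact DirectSum.decompose_of_mem_ne 𝒜 hx (by omega)
    obtain ⟨r, -, hr⟩ := Submodule.mem_span_finset.mp (hspanF hxI)
    have hxj : x = ∑ f ∈ F, (DirectSum.decompose 𝒜 (r f • f) j : R) := by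
      calc x = (DirectSum.decompose 𝒜 x j : R) := (DirectSum.decompose_of_mem_same 𝒜 hx).symm
        _ = (DirectSum.decompose 𝒜 (∑ f ∈ F, r f • f) j : R) := by rw [hr]
        _ = ∑ f ∈ F, (DirectSum.decompose 𝒜 (r f • f) j : R) := by
            rw [DirectSum.decompose_sum, DFinsupp.finset_sum_apply,
              AddSubmonoidClass.coe_finset_sum]
    rw [hxj]
    refine Ideal.sum_mem _ fun f hf => ?_
    have hfd := hdeg f hf
    have hdsup : deg f ≤ F.sup deg := Finset.le_sup hf
    have hdle : deg f ≤ j := by omega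
    rw [smul_eq_mul]
    rw [DirectSum.coe_decompose_mul_of_right_mem_of_le 𝒜 hfd hdle]
    rw [pow_succ]
    exact Ideal.mul_mem_mul (ih _ (by omega) _ (SetLike.coe_mem _)) (hFI f hf)

lemma aux_mod {N : ℕ} {S : Set M}
    (hShom : ∀ m ∈ S, ∃ j ≤ N, m ∈ ℳ j)
    (hSgen : Submodule.span R S = ⊤) {n D j : ℕ}
    (hpow : ∀ j' : ℕ, n * D ≤ j' → ∀ r ∈ 𝒜 j',
      r ∈ (HomogeneousIdeal.irrelevant 𝒜).toIdeal ^ n)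
    (hj : n * D + N ≤ j) {x : M} (hx : x ∈ ℳ j) :
    x ∈ (HomogeneousIdeal.irrelevant 𝒜).toIdeal ^ n • (⊤ : Submodule R M) := by
  classical
  have hxT : x ∈ Submodule.span R S := hSgen ▸ Submodule.mem_top
  obtain ⟨c, hsupp, hsum⟩ := Submodule.mem_span_set.mp hxT
  have hsum' : ∑ s ∈ c.support, c s • s = x := hsum
  have hxj : x = ∑ s ∈ c.support, (DirectSum.decompose ℳ (c s • s) j : M) := by
    calc x = (DirectSum.decompose ℳ x j : M) := (DirectSum.decompose_of_mem_same ℳ hx).symm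
      _ = (DirectSum.decompose ℳ (∑ s ∈ c.support, c s • s) j : M) := by rw [hsum']
      _ = ∑ s ∈ c.support, (DirectSum.decompose ℳ (c s • s) j : M) := by
          rw [DirectSum.decompose_sum, DFinsupp.finset_sum_apply,
            AddSubmonoidClass.coe_finset_sum]
  rw [hxj]
  refine Submodule.sum_mem _ fun s hs => ?_
  obtain ⟨d, hdN, hsd⟩ := hShom s (hsupp hs)
  rw [aux_decompose_smul_of_le R₀ 𝒜 ℳ hsd (by omega : d ≤ j)]
  exact Submodule.smul_mem_smul (hpow _ (by omega) _ (SetLike.coe_mem _)) Submodule.mem_top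

end AuxLemmas


/-- **Proposition 4.1(iii) of the paper.**
Let `R₀` be a commutative Noetherian ring, `R = ⊕_j R_j` a commutative graded ring which is
a finitely generated graded `R₀`-algebra with degree-zero part `R₀`, and let
`I = ⊕_{j≥1} R_j` be the irrelevant ideal.  Let `M = ⊕_j M_j` be a graded `R`-module
generated by a set `S` of homogeneous elements of degrees bounded by `N`.  Then the `I`-adic
filtration and the filtration by grading `M^i = ⊕_{j≥i} M_j` define the same topology on
`M`: one has `I^i·M ⊆ M^i` for all `i`, and for every `n ≥ 1` there is `i₀` with
`M^i ⊆ I^n·M` for all `i ≥ i₀`.  Consequently, the canonical map `θ_M` from the `I`-adic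
completion of `M` to the graded completion `lim_i M/M^i` is an isomorphism (a bijection
between the two inverse limits). -/
theorem adic_and_grading_filtration_same_topology_and_theta_bijective
    (R₀ : Type*) [CommRing R₀] [IsNoetherianRing R₀]
    (R : Type*) [CommRing R] [Algebra R₀ R]
    (𝒜 : ℕ → Submodule R₀ R) [GradedAlgebra 𝒜]
    (hfg : Algebra.FiniteType R₀ R) (h0 : 𝒜 0 = (1 : Submodule R₀ R))
    (M : Type*) [AddCommGroup M] [Module R₀ M] [Module R M] [IsScalarTower R₀ R M]
    (ℳ : ℕ → Submodule R₀ M) [DirectSum.Decomposition ℳ] [SetLike.GradedSMul 𝒜 ℳ]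
    (N : ℕ) (S : Set M)
    (hShom : ∀ m ∈ S, ∃ j ≤ N, m ∈ ℳ j)
    (hSgen : Submodule.span R S = ⊤) :
    (∀ i : ℕ,
      (((HomogeneousIdeal.irrelevant 𝒜).toIdeal ^ i • (⊤ : Submodule R M) :
          Submodule R M) : Set M) ⊆ (gradeFilt R₀ ℳ i : Set M)) ∧
    (∀ n : ℕ, 1 ≤ n → ∃ i₀ : ℕ, ∀ i : ℕ, i₀ ≤ i →
      (gradeFilt R₀ ℳ i : Set M) ⊆
        (((HomogeneousIdeal.irrelevant 𝒜).toIdeal ^ n • (⊤ : Submodule R M) :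
          Submodule R M) : Set M)) ∧
    Set.BijOn (thetaMap R₀ 𝒜 ℳ)
      (filtCompletionSet R₀ (adicFilt R₀ M ((HomogeneousIdeal.irrelevant 𝒜).toIdeal))
        (adicFilt_antitone R₀ ((HomogeneousIdeal.irrelevant 𝒜).toIdeal)))
      (filtCompletionSet R₀ (gradeFilt R₀ ℳ) (gradeFilt_antitone R₀ ℳ)) := by
  classical
  obtain ⟨D, hD1, hD⟩ := aux_exists_D R₀ 𝒜 hfg
  set I := (HomogeneousIdeal.irrelevant 𝒜).toIdeal with hIdef
  have part1 : ∀ i : ℕ, ((I ^ i • (⊤ : Submodule R M) : Submodule R M) : Set M) ⊆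
      (gradeFilt R₀ ℳ i : Set M) :=
    fun i x hx => pow_irrelevant_smul_le_gradeFilt R₀ 𝒜 ℳ i x hx
  have part2' : ∀ n i : ℕ, n * D + N ≤ i →
      (gradeFilt R₀ ℳ i : Set M) ⊆ ((I ^ n • (⊤ : Submodule R M) : Submodule R M) : Set M) := by
    intro n i hi x hx
    have hle : gradeFilt R₀ ℳ i ≤ (I ^ n • (⊤ : Submodule R M)).restrictScalars R₀ := by
      refine iSup₂_le fun j hj m hm => ?_
      exact aux_mod R₀ 𝒜 ℳ hShom hSgen (fun j' h r hr => hD n j' h r hr) (by omega) hm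
    exact hle hx
  refine ⟨part1, fun n hn => ⟨n * D + N, fun i hi => part2' n i hi⟩, ?_⟩
  -- part (iii): bijectivity of θ
  have hcof : ∀ i : ℕ, ∃ k : ℕ, gradeFilt R₀ ℳ k ≤ adicFilt R₀ M I i := by
    intro i
    rcases Nat.eq_zero_or_pos i with rfl | hi
    · refine ⟨0, fun x _ => ?_⟩
      show x ∈ I ^ 0 • (⊤ : Submodule R M)
      rw [pow_zero, Ideal.one_eq_top, Submodule.top_smul]
      trivial
    · exact ⟨i * D + N, fun x hx => part2' i _ le_rfl hx⟩
  choose k hk using hcof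
  set K : ℕ → ℕ := fun i => i + Finset.sup (Finset.range (i + 1)) k with hKdef
  have hKk : ∀ i, k i ≤ K i := fun i =>
    le_trans (Finset.le_sup (Finset.mem_range.mpr (Nat.lt_succ_self i))) (Nat.le_add_left _ _)
  have hKi : ∀ i, i ≤ K i := fun i => Nat.le_add_right _ _
  have hKmono : ∀ {i j : ℕ}, i ≤ j → K i ≤ K j := by
    intro i j hij
    exact Nat.add_le_add hij (Finset.sup_mono (Finset.range_subset_range.mpr (by omega)))
  have hKle : ∀ i, gradeFilt R₀ ℳ (K i) ≤ adicFilt R₀ M I i := fun i =>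
    le_trans (gradeFilt_antitone R₀ ℳ (hKk i)) (hk i)
  refine ⟨?_, ?_, ?_⟩
  · -- MapsTo
    intro x hx i j hij
    obtain ⟨m, hm⟩ := Submodule.Quotient.mk_surjective _ (x j)
    have h1 : x i = Submodule.Quotient.mk m := by
      rw [← hx i j hij, ← hm]
      simp only [Submodule.mapQ_apply, LinearMap.id_apply]
    rw [thetaMap_apply', thetaMap_apply', ← hm, h1]
    simp only [Submodule.mapQ_apply, LinearMap.id_apply]
  · -- InjOn
    intro x hx y hy hxy
    funext i
    obtain ⟨m, hm⟩ := Submodule.Quotient.mk_surjective _ (x (K i))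
    obtain ⟨m', hm'⟩ := Submodule.Quotient.mk_surjective _ (y (K i))
    have hθ : thetaMap R₀ 𝒜 ℳ x (K i) = thetaMap R₀ 𝒜 ℳ y (K i) := congrFun hxy (K i)
    rw [thetaMap_apply', thetaMap_apply', ← hm, ← hm'] at hθ
    simp only [Submodule.mapQ_apply, LinearMap.id_apply] at hθ
    have hmem : m - m' ∈ gradeFilt R₀ ℳ (K i) := (Submodule.Quotient.eq _).mp hθ
    have hx_i : x i = Submodule.Quotient.mk m := by
      rw [← hx i (K i) (hKi i), ← hm]
      simp only [Submodule.mapQ_apply, LinearMap.id_apply]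
    have hy_i : y i = Submodule.Quotient.mk m' := by
      rw [← hy i (K i) (hKi i), ← hm']
      simp only [Submodule.mapQ_apply, LinearMap.id_apply]
    rw [hx_i, hy_i, Submodule.Quotient.eq]
    exact hKle i hmem
  · -- SurjOn
    intro y hy
    choose m hm using fun i => Submodule.Quotient.mk_surjective
      (gradeFilt R₀ ℳ (K i)) (y (K i))
    refine ⟨fun i => Submodule.Quotient.mk (m i), ?_, ?_⟩
    · intro i j hij
      simp only [Submodule.mapQ_apply, LinearMap.id_apply]
      rw [Submodule.Quotient.eq]
      refine hKle i ?_
      have hcomp : Submodule.mapQ _ _ LinearMap.id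
          (le_comap_id_of_le R₀ (gradeFilt_antitone R₀ ℳ (hKmono hij)))
          (y (K j)) = y (K i) := hy (K i) (K j) (hKmono hij)
      rw [← hm j, ← hm i] at hcomp
      simp only [Submodule.mapQ_apply, LinearMap.id_apply] at hcomp
      exact (Submodule.Quotient.eq _).mp hcomp
    · funext i
      rw [thetaMap_apply']
      have hcomp : Submodule.mapQ _ _ LinearMap.id
          (le_comap_id_of_le R₀ (gradeFilt_antitone R₀ ℳ (hKi i)))
          (y (K i)) = y i := hy i (K i) (hKi i)
      rw [← hm i] at hcomp
      simp only [Submodule.mapQ_apply, LinearMap.id_apply] at hcomp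
      rw [Submodule.mapQ_apply]
      simp only [LinearMap.id_apply]
      exact hcomp
end

section
/- Let Φ : ⊕_{n∈ℕ} ℚ[[X]] → ∏_{j∈ℕ} (⊕_{n∈ℕ} ℚ) be the ℚ-linear map which sends a finitely supported family (f_n)_{n∈ℕ} of formal power series over ℚ to the family whose j-th entry is the (finitely supported) function n ↦ (coefficient of X^j in f_n). Then Φ is not surjective. -/
/-- **Proposition 4.1(v) of the paper.**
The canonical ℚ-linear map `Φ : ⊕_{n∈ℕ} ℚ[[X]] → ∏_{j∈ℕ} (⊕_{n∈ℕ} ℚ)`, sending a finitely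
supported family `(f_n)` of formal power series to the family whose `j`-th entry is the
(finitely supported) function `n ↦ coeff j (f_n)`, is not surjective. -/
theorem not_surjective_directSum_powerSeries_to_pi_directSum :
    ¬ Function.Surjective
      (fun (f : ℕ →₀ PowerSeries ℚ) (j : ℕ) =>
        Finsupp.mapRange (fun p => PowerSeries.coeff (R := ℚ) j p) (by simp) f) := by
  intro h
  obtain ⟨f, hf⟩ := h (fun j => Finsupp.single j (1 : ℚ))
  obtain ⟨n, hn⟩ := Infinite.exists_notMem_finset f.support
  have h1 := congrArg (fun g => g n n) hf
  simp [Finsupp.mapRange_apply, Finsupp.notMem_support_iff.mp hn] at h1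
end

section
/- Let R ⊆ S be an inclusion of commutative rings such that R is Noetherian and S is a finitely generated R-algebra. Let G be a finite group acting on S by R-algebra automorphisms. Then the ring of invariants S^G = {s ∈ S : σ(s) = s for all σ ∈ G} is a finitely generated R-algebra; in particular, S^G is Noetherian. -/
/-- The subalgebra of invariants of an action of a group `G` on a commutative `R`-algebra `S`
by `R`-algebra automorphisms, given by a group homomorphism `φ : G →* (S ≃ₐ[R] S)`. -/
def invariantSubalgebra (R S : Type*) [CommRing R] [CommRing S] [Algebra R S]
    (G : Type*) [Group G] (φ : G →* (S ≃ₐ[R] S)) : Subalgebra R S where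
  carrier := {x | ∀ g : G, φ g x = x}
  mul_mem' {a b} ha hb g := by rw [map_mul, ha g, hb g]
  add_mem' {a b} ha hb g := by rw [map_add, ha g, hb g]
  one_mem' g := map_one (φ g)
  zero_mem' g := map_zero (φ g)
  algebraMap_mem' r g := (φ g).commutes r

open Polynomial

theorem invariantSubalgebra.aux_integral (R S : Type*) [CommRing R] [CommRing S] [Algebra R S]
    (G : Type*) [Group G] [Fintype G] (φ : G →* (S ≃ₐ[R] S)) (B : Subalgebra R S)
    (hB : ∀ x, (∀ g : G, φ g x = x) → x ∈ B) (x : S) : IsIntegral B x := by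
  classical
  set p : S[X] := ∏ g : G, (X - C (φ g x)) with hp
  have hmonic : p.Monic := monic_prod_of_monic _ _ fun _ _ => monic_X_sub_C _
  have hcoeff : (↑p.coeffs : Set S) ⊆ ↑B.toSubring := by
    intro c hc
    obtain ⟨n, _, rfl⟩ := Polynomial.mem_coeffs_iff.1 hc
    refine hB _ fun h => ?_
    have : Polynomial.map ((φ h : S ≃ₐ[R] S) : S →ₐ[R] S).toRingHom p = p := by
      rw [hp, Polynomial.map_prod]
      simp only [Polynomial.map_sub, Polynomial.map_X, Polynomial.map_C]
      exact Fintype.prod_bijective (fun g => h * g) (Group.mulLeft_bijective h) _ _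
        (fun g => by simp [map_mul])
    conv_rhs => rw [← this]
    rw [Polynomial.coeff_map]
    rfl
  refine ⟨p.toSubring B.toSubring hcoeff, ?_, ?_⟩
  · rw [Polynomial.monic_toSubring]; exact hmonic
  · have : Polynomial.eval₂ (algebraMap B S) x (p.toSubring B.toSubring hcoeff)
        = p.eval x := by
      rw [Polynomial.eval₂_eq_eval_map,
        show (algebraMap B S : ↥B →+* S) = B.toSubring.subtype from rfl,
        Polynomial.map_toSubring]
    rw [this, hp, Polynomial.eval_prod]
    exact Finset.prod_eq_zero (Finset.mem_univ (1 : G)) (by simp)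
theorem invariantSubalgebra.aux_main
    (R S : Type*) [CommRing R] [CommRing S] [Algebra R S]
    [IsNoetherianRing R] (hS : Algebra.FiniteType R S)
    (G : Type*) [Group G] [Finite G] (φ : G →* (S ≃ₐ[R] S)) (B : Subalgebra R S)
    (hB : ∀ x : S, x ∈ B ↔ ∀ g : G, φ g x = x) :
    Algebra.FiniteType R B ∧ IsNoetherianRing B := by
  cases nonempty_fintype G
  have hint : Algebra.IsIntegral B S :=
    ⟨fun x => invariantSubalgebra.aux_integral R S G φ B (fun y hy => (hB y).2 hy) x⟩
  haveI : Algebra.FiniteType R S := hS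
  haveI hftB : Algebra.FiniteType B S := Algebra.FiniteType.of_restrictScalars_finiteType R B S
  haveI hfin : Module.Finite B S := Algebra.IsIntegral.finite
  have hfg : (⊤ : Subalgebra R B).FG :=
    fg_of_fg_of_fg R B S hS.1 hfin.1 Subtype.val_injective
  haveI hft : Algebra.FiniteType R B := ⟨hfg⟩
  exact ⟨hft, Algebra.FiniteType.isNoetherianRing R B⟩

/-- **Lemma 4.6 (lem:folklore1*) of the paper.**
Let `R ⊆ S` be an inclusion of commutative rings with `R` Noetherian and `S` a finitely
generated `R`-algebra, and let a finite group `G` act on `S` by `R`-algebra automorphisms.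
Then the ring of invariants `S^G` is a finitely generated `R`-algebra; in particular,
`S^G` is Noetherian. -/
theorem invariantSubalgebra_finiteType_and_noetherian
    (R S : Type*) [CommRing R] [CommRing S] [Algebra R S]
    [IsNoetherianRing R] (hS : Algebra.FiniteType R S)
    (G : Type*) [Group G] [Finite G] (φ : G →* (S ≃ₐ[R] S)) :
    Algebra.FiniteType R (invariantSubalgebra R S G φ) ∧
      IsNoetherianRing (invariantSubalgebra R S G φ) := by
  exact invariantSubalgebra.aux_main R S hS G φ _ (fun x => Iff.rfl)
end

section
/- Let A be an associative unital (possibly noncommutative) ℚ-algebra and let A[t₁,…,tₙ] be the polynomial ring over A in n central, pairwise commuting variables. Let f₁,…,f_s be linear forms f_j = a_{j1}t₁ + ⋯ + a_{jn}tₙ with rational coefficients such that the coefficient vectors c(f₁),…,c(f_s) ∈ ℚⁿ are linearly independent over ℚ. For each j, let γ_j = Σ_{i=0}^{d_j} m_i^j · f_j^i, where the leading coefficient m_{d_j}^j is a nonzero rational number and all coefficients m_i^j lie in the center Z(A) of A. Then, as (two-sided) ideals in A[t₁,…,tₙ], one has (γ₁·γ₂⋯γ_s) = ⋂_{j=1}^{s}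 (γ_j). -/
open Polynomial AddMonoidAlgebra

namespace Lem63

/-- `C c` is central in `S[X]` when `c` is central in `S`. -/
lemma commute_C_poly {S : Type*} [Ring S] {c : S} (hc : ∀ y, Commute c y) (p : S[X]) :
    Commute (C c) p := by
  unfold Commute SemiconjBy
  ext k
  rw [coeff_C_mul, coeff_mul_C, (hc _).eq]

/-- Key division lemma: if `g` is monic, `c` is central and left-regular, and
`g ∣ C c * y`, then `g ∣ y`. -/
lemma dvd_of_C_mul_eq_monic_mul {S : Type*} [Ring S] {g : S[X]} (hg : g.Monic)
    {c : S} (hc : ∀ y, Commute c y) (hreg : ∀ y : S, c * y = 0 → y = 0)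
    {y h : S[X]} (heq : C c * y = g * h) : ∃ z, y = g * z := by
  rcases subsingleton_or_nontrivial S with hS | hS
  · exact ⟨0, Subsingleton.elim _ _⟩
  have hy : y %ₘ g + g * (y /ₘ g) = y := modByMonic_add_div y g
  set r := y %ₘ g with hr
  set u := y /ₘ g with hu
  have key : g * (h - C c * u) = C c * r := by
    have h1 : C c * y = C c * r + g * (C c * u) := by
      rw [← hy, mul_add]
      congr 1
      rw [← mul_assoc, ← mul_assoc, ((commute_C_poly hc g).eq)]
    rw [mul_sub, ← heq, h1, add_sub_cancel_right]
  have hrz : r = 0 := by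
    by_cases hh : h - C c * u = 0
    · have : C c * r = 0 := by rw [← key, hh, mul_zero]
      ext k
      have := congrArg (fun p => Polynomial.coeff p k) this
      simp only [Polynomial.coeff_C_mul, Polynomial.coeff_zero] at this
      simpa using hreg _ this
    · exfalso
      have hdeg1 : degree (C c * r) < degree g :=
        lt_of_le_of_lt (le_trans (degree_mul_le _ _)
          (by simpa using add_le_add degree_C_le (le_refl (degree r))))
          (degree_modByMonic_lt y hg)
      have hcoeff : (g * (h - C c * u)).coeff (g.natDegree + (h - C c * u).natDegree) =
          (h - C c * u).leadingCoeff := by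
        rw [coeff_mul_degree_add_degree]
        simp [hg.leadingCoeff]
      have hne : (g * (h - C c * u)).coeff (g.natDegree + (h - C c * u).natDegree) ≠ 0 := by
        rw [hcoeff]
        exact leadingCoeff_ne_zero.mpr hh
      have hdeg2 : (↑(g.natDegree + (h - C c * u).natDegree) : WithBot ℕ) ≤
          degree (g * (h - C c * u)) := le_degree_of_ne_zero hne
      have hdeg3 : degree g ≤ degree (g * (h - C c * u)) := by
        refine le_trans ?_ hdeg2
        rw [degree_eq_natDegree hg.ne_zero]
        exact_mod_cast Nat.cast_le.mpr (Nat.le_add_right _ _)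
      rw [key] at hdeg3
      exact absurd (lt_of_le_of_lt hdeg3 hdeg1) (lt_irrefl _)
  exact ⟨u, by rw [← hy, hrz, zero_add]⟩

/-- Extraction lemma: a polynomial `∑ C (c i) * (X + C e)^i` whose top coefficient is a
nonzero rational is a rational unit times a monic polynomial. -/
lemma extract_monic {S : Type*} [Ring S] [Algebra ℚ S] (d : ℕ) (c : ℕ → S) (q : ℚ)
    (hq : q ≠ 0) (hcd : c d = algebraMap ℚ S q) (e : S) :
    ∃ g : S[X], g.Monic ∧
      ∑ i ∈ Finset.range (d + 1), C (c i) * (X + C e) ^ i = algebraMap ℚ S[X] q * g := by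
  rcases subsingleton_or_nontrivial S with hS | hS
  · exact ⟨1, monic_one, Subsingleton.elim _ _⟩
  set h : S[X] := X + C e with hh'
  have hh : h.Monic := monic_X_add_C e
  set L : S[X] := ∑ i ∈ Finset.range d, C (c i) * h ^ i with hL
  have hLdeg : degree L < (d : WithBot ℕ) := by
    refine lt_of_le_of_lt (degree_sum_le _ _) ?_
    rw [Finset.sup_lt_iff (by exact_mod_cast WithBot.bot_lt_coe d)]
    intro i hi
    have hi' : i < d := Finset.mem_range.mp hi
    refine lt_of_le_of_lt (le_trans (degree_mul_le _ _)
      (add_le_add degree_C_le (degree_pow_le _ _))) ?_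
    have hdh : degree h = 1 := by
      rw [hh']; exact degree_X_add_C e
    rw [hdh, zero_add]
    simp only [nsmul_eq_mul, mul_one]
    exact_mod_cast hi'
  have hdpow : degree (h ^ d) = (d : WithBot ℕ) := by
    rw [degree_eq_natDegree (hh.pow d).ne_zero, hh.natDegree_pow]
    rw [hh', natDegree_X_add_C, mul_one]
  refine ⟨h ^ d + algebraMap ℚ S[X] q⁻¹ * L, ?_, ?_⟩
  · refine (hh.pow d).add_of_left ?_
    rw [hdpow, Polynomial.algebraMap_apply]
    refine lt_of_le_of_lt (le_trans (degree_mul_le _ _) ?_) hLdeg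
    exact le_trans (add_le_add degree_C_le le_rfl) (le_of_eq (zero_add _))
  · rw [Finset.sum_range_succ, hcd, mul_add]
    have hmaps : (algebraMap ℚ S[X]) q * ((algebraMap ℚ S[X]) q⁻¹ * L) = L := by
      rw [← mul_assoc, ← map_mul, mul_inv_cancel₀ hq, map_one, one_mul]
    rw [hmaps, Polynomial.algebraMap_apply, add_comm]


variable {A : Type*} [Ring A] {n : ℕ}

local notation "R'" => AddMonoidAlgebra A (Fin n →₀ ℕ)

/-- single with central coefficient is central. -/
lemma commute_single {g : Fin n →₀ ℕ} {b : A} (hb : ∀ c, Commute b c) (x : R') :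
    Commute (AddMonoidAlgebra.single g b) x := by
  induction x using AddMonoidAlgebra.induction_linear with
  | zero => exact Commute.zero_right _
  | add p q hp hq => exact hp.add_right hq
  | single h c =>
    unfold Commute SemiconjBy
    rw [AddMonoidAlgebra.single_mul_single, AddMonoidAlgebra.single_mul_single,
      add_comm, (hb c).eq]

/-- the variables -/
noncomputable def tv (A : Type*) [Ring A] {n : ℕ} (i : Fin n) : AddMonoidAlgebra A (Fin n →₀ ℕ) :=
  AddMonoidAlgebra.single (Finsupp.single i 1) (1 : A)

lemma commute_tv (i : Fin n) (x : R') : Commute (tv A i) x :=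
  commute_single (fun c => Commute.one_left c) x

lemma single_prod_eq (s : Finset (Fin n)) (v : Fin n →₀ ℕ)
    (F : Fin n → Subsemiring.center R') (hF : ∀ i, (F i : R') = tv A i) :
    ((∏ i ∈ s, F i ^ (v i) : Subsemiring.center R') : R') =
      AddMonoidAlgebra.single (∑ i ∈ s, Finsupp.single i (v i)) (1 : A) := by
  classical
  induction s using Finset.induction with
  | empty => simp [AddMonoidAlgebra.one_def]
  | insert j s' hx ih =>
    rw [Finset.prod_insert hx, Finset.sum_insert hx]
    push_cast
    rw [ih, hF, tv, AddMonoidAlgebra.single_pow, one_pow,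
      AddMonoidAlgebra.single_mul_single, one_mul, Finsupp.smul_single, smul_eq_mul, mul_one]

lemma univ_sum_single (v : Fin n →₀ ℕ) :
    ∑ i : Fin n, Finsupp.single i (v i) = v := by
  ext a
  rw [Finsupp.finset_sum_apply]
  simp [Finsupp.single_apply]

section Phi

variable {T : Type*} [Semiring T]

/-- Lift a ring hom `A →+* T` and central images for the variables to a ring hom on the
polynomial ring. -/
noncomputable def ΦHom (fA : A →+* T) (w : Fin n → Subsemiring.center T) :
    AddMonoidAlgebra A (Fin n →₀ ℕ) →+* T :=
  AddMonoidAlgebra.liftNCRingHom fA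
    ((SubsemiringClass.subtype (Subsemiring.center T)).toMonoidHom.comp
      { toFun := fun v => ∏ i : Fin n, w i ^ (Multiplicative.toAdd v i)
        map_one' := by simp
        map_mul' := fun u v => by
          simp only [toAdd_mul, Finsupp.add_apply, pow_add, Finset.prod_mul_distrib] })
    (fun a v => Subsemiring.mem_center_iff.mp
      (∏ i : Fin n, w i ^ (Multiplicative.toAdd v i) : Subsemiring.center T).2 (fA a))

lemma ΦHom_single (fA : A →+* T) (w : Fin n → Subsemiring.center T) (v : Fin n →₀ ℕ) (b : A) :
    ΦHom fA w (AddMonoidAlgebra.single v b) =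
      fA b * ((∏ i : Fin n, w i ^ (v i) : Subsemiring.center T) : T) := by
  classical
  unfold ΦHom liftNCRingHom
  simp only [RingHom.coe_mk, MonoidHom.coe_mk]
  erw [AddMonoidAlgebra.liftNC_single]
  rfl

lemma ΦHom_single_zero (fA : A →+* T) (w : Fin n → Subsemiring.center T) (b : A) :
    ΦHom fA w (AddMonoidAlgebra.single 0 b) = fA b := by
  rw [ΦHom_single]
  simp

lemma ΦHom_single_var (fA : A →+* T) (w : Fin n → Subsemiring.center T) (i : Fin n) (b : A) :
    ΦHom fA w (AddMonoidAlgebra.single (Finsupp.single i 1) b) = fA b * (w i : T) := by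
  classical
  rw [ΦHom_single]
  congr 2
  rw [Finset.prod_eq_single i (fun b _ hb => by
    rw [Finsupp.single_apply, if_neg (Ne.symm hb), pow_zero]) (by simp)]
  simp

lemma map_center_prod {ι : Type*} (Ψ : T →+* R') (s : Finset ι)
    (F : ι → Subsemiring.center T) (G : ι → Subsemiring.center R')
    (hFG : ∀ i, Ψ (F i : T) = (G i : R')) :
    Ψ ((∏ i ∈ s, F i : Subsemiring.center T) : T) =
      ((∏ i ∈ s, G i : Subsemiring.center R') : R') := by
  classical
  induction s using Finset.induction with
  | empty => simp
  | insert j s' hx ih =>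
    rw [Finset.prod_insert hx, Finset.prod_insert hx]
    push_cast
    rw [map_mul, ih, hFG]

/-- the variables as elements of the center -/
noncomputable def tvC (A : Type*) [Ring A] {n : ℕ} (i : Fin n) :
    Subsemiring.center (AddMonoidAlgebra A (Fin n →₀ ℕ)) :=
  ⟨tv A i, Subsemiring.mem_center_iff.mpr fun g => ((commute_tv i g).symm).eq⟩

lemma ΦHom_leftInverse (fA : A →+* T) (w : Fin n → Subsemiring.center T) (Ψ : T →+* R')
    (hA : ∀ b, Ψ (fA b) = AddMonoidAlgebra.single 0 b)
    (hw : ∀ i, Ψ (w i : T) = tv A i) (x : R') : Ψ (ΦHom fA w x) = x := by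
  have key : (Ψ.comp (ΦHom fA w)) = RingHom.id R' := by
    apply AddMonoidAlgebra.ringHom_ext
    · intro b
      rw [RingHom.comp_apply, ΦHom_single_zero, hA, RingHom.id_apply]
    · intro v
      rw [RingHom.comp_apply, ΦHom_single, map_one, one_mul, RingHom.id_apply]
      rw [map_center_prod Ψ Finset.univ (fun i => w i ^ (v i)) (fun i => tvC A i ^ (v i))
        (fun i => by push_cast; rw [map_pow, hw]; rfl)]
      rw [single_prod_eq Finset.univ v (tvC A) (fun i => rfl), univ_sum_single]
  calc Ψ (ΦHom fA w x) = (Ψ.comp (ΦHom fA w)) x := rfl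
  _ = x := by rw [key]; rfl

end Phi



lemma exists_dual {n : ℕ} (u v : Fin n → ℚ) (h : LinearIndependent ℚ ![u, v]) :
    ∃ α β : Fin n → ℚ, (∑ i, u i * α i) = 1 ∧ (∑ i, v i * α i) = 0 ∧
      (∑ i, u i * β i) = 0 ∧ (∑ i, v i * β i) = 1 := by
  classical
  set W := Submodule.span ℚ (Set.range ![u, v])
  let B : Module.Basis (Fin 2) ℚ W := Module.Basis.span h
  obtain ⟨φ, hφ⟩ := LinearMap.exists_extend (B.coord 0)
  obtain ⟨ψ, hψ⟩ := LinearMap.exists_extend (B.coord 1)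
  have hB0 : ((B 0 : W) : Fin n → ℚ) = u := by
    rw [Module.Basis.span_apply]; rfl
  have hB1 : ((B 1 : W) : Fin n → ℚ) = v := by
    rw [Module.Basis.span_apply]; rfl
  have hφu : φ u = 1 := by
    have := LinearMap.congr_fun hφ (B 0)
    simp only [LinearMap.comp_apply, Submodule.subtype_apply] at this
    rw [hB0] at this
    rw [this, Module.Basis.coord_apply, Module.Basis.repr_self, Finsupp.single_eq_same]
  have hφv : φ v = 0 := by
    have := LinearMap.congr_fun hφ (B 1)
    simp only [LinearMap.comp_apply, Submodule.subtype_apply] at this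
    rw [hB1] at this
    rw [this, Module.Basis.coord_apply, Module.Basis.repr_self]
    simp
  have hψu : ψ u = 0 := by
    have := LinearMap.congr_fun hψ (B 0)
    simp only [LinearMap.comp_apply, Submodule.subtype_apply] at this
    rw [hB0] at this
    rw [this, Module.Basis.coord_apply, Module.Basis.repr_self]
    simp
  have hψv : ψ v = 1 := by
    have := LinearMap.congr_fun hψ (B 1)
    simp only [LinearMap.comp_apply, Submodule.subtype_apply] at this
    rw [hB1] at this
    rw [this, Module.Basis.coord_apply, Module.Basis.repr_self, Finsupp.single_eq_same]
  have hval : ∀ (θ : (Fin n → ℚ) →ₗ[ℚ] ℚ) (x : Fin n → ℚ),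
      (∑ i, x i * θ (fun j => if i = j then 1 else 0)) = θ x := fun θ x => by
    rw [LinearMap.pi_apply_eq_sum_univ θ x]
    simp [smul_eq_mul]
  exact ⟨fun i => φ (fun j => if i = j then 1 else 0),
         fun i => ψ (fun j => if i = j then 1 else 0),
         by rw [hval]; exact hφu, by rw [hval]; exact hφv,
         by rw [hval]; exact hψu, by rw [hval]; exact hψv⟩

lemma pair_indep {s n : ℕ} (a : Fin s → Fin n → ℚ) (hindep : LinearIndependent ℚ a)
    (j k : Fin s) (hjk : j ≠ k) : LinearIndependent ℚ ![a j, a k] := by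
  have hinj : Function.Injective ![j, k] := by
    intro x y hxy
    fin_cases x <;> fin_cases y <;> simp_all <;>
      first | rfl | exact absurd hxy hjk | exact absurd hxy.symm hjk
  have := hindep.comp ![j, k] hinj
  have heq : a ∘ ![j, k] = ![a j, a k] := by
    funext i
    fin_cases i <;> simp
  rwa [heq] at this


end Lem63

namespace Lem63

lemma ccC {S : Type*} [Semiring S] (x : S) :
    Polynomial.constantCoeff (Polynomial.C x) = x := Polynomial.coeff_C_zero

lemma ccX {S : Type*} [Semiring S] :
    Polynomial.constantCoeff (Polynomial.X : Polynomial S) = 0 := Polynomial.coeff_X_zero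

section Pair

variable {A : Type*} [Ring A] [Algebra ℚ A] {n s : ℕ}

local notation "R'" => AddMonoidAlgebra A (Fin n →₀ ℕ)
local notation "S'" => Polynomial (AddMonoidAlgebra A (Fin n →₀ ℕ))
local notation "T'" => Polynomial (Polynomial (AddMonoidAlgebra A (Fin n →₀ ℕ)))

lemma single_zero_algebraMap (c : ℚ) :
    AddMonoidAlgebra.single (0 : Fin n →₀ ℕ) (algebraMap ℚ A c) = algebraMap ℚ R' c := by
  rw [AddMonoidAlgebra.coe_algebraMap]; rfl

lemma commute_f {c : Fin n → ℚ}
    (x : R') : Commute (∑ i, AddMonoidAlgebra.single (Finsupp.single i 1)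
      (algebraMap ℚ A (c i))) x :=
  Commute.sum_left _ _ _ fun i _ =>
    commute_single (fun y => Algebra.commutes (c i) y) x

set_option maxHeartbeats 2000000 in
lemma pair_dvd
    (a : Fin s → Fin n → ℚ) (hindep : LinearIndependent ℚ a)
    (d : Fin s → ℕ) (m : Fin s → ℕ → A)
    (hm : ∀ j, ∀ i ≤ d j, m j i ∈ Set.center A)
    (hlead : ∀ j, ∃ q : ℚ, q ≠ 0 ∧ m j (d j) = algebraMap ℚ A q)
    (f : Fin s → AddMonoidAlgebra A (Fin n →₀ ℕ))
    (hf : ∀ j, f j = ∑ i : Fin n,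
      AddMonoidAlgebra.single (Finsupp.single i 1) (algebraMap ℚ A (a j i)))
    (γ : Fin s → AddMonoidAlgebra A (Fin n →₀ ℕ))
    (hγ : ∀ j, γ j = ∑ i ∈ Finset.range (d j + 1),
      AddMonoidAlgebra.single 0 (m j i) * (f j) ^ i)
    (j k : Fin s) (hjk : j ≠ k) (x : R') (hdvd : γ j ∣ γ k * x) : γ j ∣ x := by
  classical
  obtain ⟨α, β, hα1, hα0, hβ0, hβ1⟩ := exists_dual (a j) (a k) (pair_indep a hindep j k hjk)
  obtain ⟨qj, hqj, hmj⟩ := hlead j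
  obtain ⟨qk, hqk, hmk⟩ := hlead k
  -- the ring hom fA : A →+* T'
  set fA : A →+* T' := ((Polynomial.C).comp (Polynomial.C)).comp
    (AddMonoidAlgebra.singleZeroRingHom) with hfA
  have hfA_apply : ∀ b : A, fA b =
      Polynomial.C (Polynomial.C (AddMonoidAlgebra.single (0 : Fin n →₀ ℕ) b)) := fun b => rfl
  -- the images of the variables
  set wel : Fin n → T' := fun i =>
    Polynomial.C (Polynomial.C (tv A i)) + Polynomial.C Polynomial.X * algebraMap ℚ T' (β i)
      + Polynomial.X * algebraMap ℚ T' (α i) with hwel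
  have hwel_comm : ∀ i, ∀ y : T', Commute (wel i) y := by
    intro i y
    refine Commute.add_left (Commute.add_left ?_ ?_) ?_
    · exact commute_C_poly (fun z => commute_C_poly (fun u => commute_tv i u) z) y
    · exact Commute.mul_left (commute_C_poly (fun z => Polynomial.commute_X z) y)
        (Algebra.commutes (β i) y)
    · exact Commute.mul_left (Polynomial.commute_X y) (Algebra.commutes (α i) y)
  set w : Fin n → Subsemiring.center T' := fun i =>
    ⟨wel i, Subsemiring.mem_center_iff.mpr fun g => ((hwel_comm i g).symm).eq⟩ with hwdef
  set Φ : AddMonoidAlgebra A (Fin n →₀ ℕ) →+* T' := ΦHom fA w with hΦdef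
  set Ψ : T' →+* R' := (Polynomial.constantCoeff).comp (Polynomial.constantCoeff) with hΨdef
  have halgT : ∀ c : ℚ, (algebraMap ℚ T') c =
      Polynomial.C (Polynomial.C (algebraMap ℚ R' c)) := fun c => by
    rw [Polynomial.algebraMap_apply, Polynomial.algebraMap_apply]
  have hΨΦ : ∀ z : R', Ψ (Φ z) = z := by
    refine fun z => ΦHom_leftInverse fA w Ψ (fun b => ?_) (fun i => ?_) z
    · rw [hfA_apply, hΨdef, RingHom.comp_apply, ccC, ccC]
    · rw [show (w i : T') = wel i from rfl, hwel]
      simp only [halgT, hΨdef, map_add, map_mul, RingHom.comp_apply, ccC, ccX,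
        zero_mul, mul_zero, map_zero, add_zero]
  have hwel_apply : ∀ i, wel i =
      Polynomial.C (Polynomial.C (tv A i)) + Polynomial.C Polynomial.X * algebraMap ℚ T' (β i)
        + Polynomial.X * algebraMap ℚ T' (α i) := fun i => rfl
  have hfA_alg : ∀ c : ℚ, fA (algebraMap ℚ A c) = algebraMap ℚ T' c := fun c => by
    rw [hfA_apply, single_zero_algebraMap, halgT]
  have hterm : ∀ (c : ℚ) (i : Fin n),
      Φ (AddMonoidAlgebra.single (Finsupp.single i 1) (algebraMap ℚ A c)) =
        Polynomial.C (Polynomial.C (AddMonoidAlgebra.single (Finsupp.single i 1)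
          (algebraMap ℚ A c)))
        + Polynomial.C Polynomial.X * algebraMap ℚ T' (c * β i)
        + Polynomial.X * algebraMap ℚ T' (c * α i) := by
    intro c i
    rw [hΦdef, ΦHom_single_var, hfA_alg]
    rw [show (w i : T') = wel i from rfl, hwel_apply]
    rw [mul_add, mul_add]
    congr 1
    · congr 1
      · rw [halgT c, ← map_mul, ← map_mul]
        rw [show algebraMap ℚ R' c = AddMonoidAlgebra.single (0 : Fin n →₀ ℕ)
          (algebraMap ℚ A c) from (single_zero_algebraMap c).symm]
        rw [tv, AddMonoidAlgebra.single_mul_single]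
        simp
      · rw [← mul_assoc, Algebra.commutes c (Polynomial.C Polynomial.X : T'), mul_assoc,
          ← map_mul]
    · rw [← mul_assoc, Algebra.commutes c (Polynomial.X : T'), mul_assoc, ← map_mul]
  have hΦlin : ∀ (c : Fin n → ℚ),
      Φ (∑ i, AddMonoidAlgebra.single (Finsupp.single i 1) (algebraMap ℚ A (c i))) =
        Polynomial.C (Polynomial.C (∑ i, AddMonoidAlgebra.single (Finsupp.single i 1)
          (algebraMap ℚ A (c i))))
        + Polynomial.C Polynomial.X * algebraMap ℚ T' (∑ i, c i * β i)
        + Polynomial.X * algebraMap ℚ T' (∑ i, c i * α i) := by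
    intro c
    rw [map_sum]
    rw [Finset.sum_congr rfl (fun i _ => hterm (c i) i)]
    rw [Finset.sum_add_distrib, Finset.sum_add_distrib]
    congr 1
    · congr 1
      · rw [← map_sum, ← map_sum]
      · rw [← Finset.mul_sum, ← map_sum]
    · rw [← Finset.mul_sum, ← map_sum]
  have hΦfj : Φ (f j) = Polynomial.C (Polynomial.C (f j)) + Polynomial.X := by
    conv_lhs => rw [hf j, hΦlin, hβ0, hα1]
    rw [map_zero, map_one, mul_zero, add_zero, mul_one, ← hf j]
  have hΦfk : Φ (f k) = Polynomial.C (Polynomial.C (f k)) + Polynomial.C Polynomial.X := by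
    conv_lhs => rw [hf k, hΦlin, hβ1, hα0]
    rw [map_zero, map_one, mul_zero, add_zero, mul_one, ← hf k]
  obtain ⟨gj, hgj_monic, hgj⟩ := extract_monic (S := S') (d j)
      (fun i => Polynomial.C (AddMonoidAlgebra.single 0 (m j i))) qj hqj
      (by show Polynomial.C (AddMonoidAlgebra.single 0 (m j (d j))) = _
          rw [hmj, single_zero_algebraMap, Polynomial.algebraMap_apply])
      (Polynomial.C (f j))
  have hΦγj : Φ (γ j) = algebraMap ℚ T' qj * gj := by
    rw [hγ j, map_sum, ← hgj]
    refine Finset.sum_congr rfl fun i _ => ?_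
    rw [map_mul, map_pow, hΦfj, hΦdef, ΦHom_single_zero, hfA_apply,
      add_comm (Polynomial.C (Polynomial.C (f j))) Polynomial.X]
  have hΦγk : Φ (γ k) = Polynomial.C (∑ i ∈ Finset.range (d k + 1),
      Polynomial.C (AddMonoidAlgebra.single 0 (m k i)) * (Polynomial.X + Polynomial.C (f k)) ^ i) := by
    rw [hγ k, map_sum, map_sum]
    refine Finset.sum_congr rfl fun i _ => ?_
    rw [map_mul, map_pow, hΦfk, hΦdef, ΦHom_single_zero, hfA_apply]
    rw [show Polynomial.C (Polynomial.C (f k)) + Polynomial.C Polynomial.X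
        = Polynomial.C (Polynomial.C (f k) + Polynomial.X) from (map_add _ _ _).symm]
    rw [← map_pow, ← map_mul, add_comm (Polynomial.C (f k)) Polynomial.X]
  set ck : S' := ∑ i ∈ Finset.range (d k + 1),
      Polynomial.C (AddMonoidAlgebra.single 0 (m k i)) * (Polynomial.X + Polynomial.C (f k)) ^ i
    with hck
  obtain ⟨gk, hgk_monic, hgk⟩ := extract_monic (S := R') (d k)
      (fun i => AddMonoidAlgebra.single 0 (m k i)) qk hqk
      (by show AddMonoidAlgebra.single 0 (m k (d k)) = _
          rw [hmk, single_zero_algebraMap]) (f k)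
  have hck_comm : ∀ y : S', Commute ck y := by
    intro y
    refine Commute.sum_left _ _ _ fun i hi => Commute.mul_left ?_ (Commute.pow_left ?_ i)
    · refine commute_C_poly (fun z => ?_) y
      exact commute_single (fun b =>
        (Semigroup.mem_center_iff.mp (hm k i (Nat.lt_succ_iff.mp (Finset.mem_range.mp hi))) b).symm) z
    · exact Commute.add_left (Polynomial.commute_X y)
        (commute_C_poly (fun z => hf k ▸ commute_f z) y)
  have hck_reg : ∀ y : S', ck * y = 0 → y = 0 := by
    intro y hy
    rw [hck, hgk, mul_assoc] at hy
    have hu : IsUnit (algebraMap ℚ S' qk) := (Ne.isUnit hqk).map (algebraMap ℚ S')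
    have h0 : gk * y = 0 := by rwa [IsUnit.mul_right_eq_zero hu] at hy
    exact hgk_monic.isRegular.left (show gk * y = gk * 0 by rw [h0, mul_zero])
  obtain ⟨y, hy⟩ := hdvd
  have heqT : Polynomial.C ck * Φ x = gj * (algebraMap ℚ T' qj * Φ y) := by
    have h1 := congrArg Φ hy
    rw [map_mul, map_mul, hΦγk, hΦγj] at h1
    rw [h1, Algebra.commutes qj gj, mul_assoc]
  obtain ⟨z, hz⟩ := dvd_of_C_mul_eq_monic_mul hgj_monic hck_comm hck_reg heqT
  have hx : x = Ψ gj * Ψ z := by rw [← hΨΦ x, hz, map_mul]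
  have hγjΨ : γ j = algebraMap ℚ R' qj * Ψ gj := by
    rw [← hΨΦ (γ j), hΦγj, map_mul]
    congr 1
    rw [halgT, hΨdef, RingHom.comp_apply, ccC, ccC]
  refine ⟨algebraMap ℚ R' qj⁻¹ * Ψ z, ?_⟩
  rw [hγjΨ, hx]
  symm
  calc algebraMap ℚ R' qj * Ψ gj * (algebraMap ℚ R' qj⁻¹ * Ψ z)
      = algebraMap ℚ R' qj * ((Ψ gj * algebraMap ℚ R' qj⁻¹) * Ψ z) := by
        rw [mul_assoc, mul_assoc]
    _ = algebraMap ℚ R' qj * ((algebraMap ℚ R' qj⁻¹ * Ψ gj) * Ψ z) := by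
        rw [Algebra.commutes qj⁻¹ (Ψ gj)]
    _ = (algebraMap ℚ R' qj * algebraMap ℚ R' qj⁻¹) * (Ψ gj * Ψ z) := by
        rw [mul_assoc, mul_assoc]
    _ = Ψ gj * Ψ z := by
        rw [← map_mul, mul_inv_cancel₀ hqj, map_one, one_mul]

end Pair

end Lem63

/-- **Lemma 6.3 (lem:elem1) of the paper.**
Let `A` be an associative unital (possibly noncommutative) ℚ-algebra and let
`A[t₁,…,tₙ]` be the polynomial ring over `A` in `n` central, pairwise commuting variables
(realized as `AddMonoidAlgebra A (Fin n →₀ ℕ)`).  Let `f₁,…,f_s` be linear forms with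
rational coefficients whose coefficient vectors are linearly independent over ℚ, and for
each `j` let `γ_j = Σ_{i=0}^{d_j} m_i^j·f_j^i` with all `m_i^j` in the center of `A` and
the leading coefficient `m_{d_j}^j` a nonzero rational.  Then, as ideals of
`A[t₁,…,tₙ]`, one has `(γ₁⋯γ_s) = ⋂_j (γ_j)`. -/
theorem ideal_prod_eq_iInter_of_indep_linear_forms
    (A : Type*) [Ring A] [Algebra ℚ A] (n s : ℕ)
    (a : Fin s → Fin n → ℚ) (hindep : LinearIndependent ℚ a)
    (d : Fin s → ℕ) (m : Fin s → ℕ → A)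
    (hm : ∀ j, ∀ i ≤ d j, m j i ∈ Set.center A)
    (hlead : ∀ j, ∃ q : ℚ, q ≠ 0 ∧ m j (d j) = algebraMap ℚ A q)
    (f : Fin s → AddMonoidAlgebra A (Fin n →₀ ℕ))
    (hf : ∀ j, f j = ∑ i : Fin n,
      AddMonoidAlgebra.single (Finsupp.single i 1) (algebraMap ℚ A (a j i)))
    (γ : Fin s → AddMonoidAlgebra A (Fin n →₀ ℕ))
    (hγ : ∀ j, γ j = ∑ i ∈ Finset.range (d j + 1),
      AddMonoidAlgebra.single 0 (m j i) * (f j) ^ i) :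
    Set.range (fun q : AddMonoidAlgebra A (Fin n →₀ ℕ) => (List.ofFn γ).prod * q) =
      ⋂ j : Fin s, Set.range (fun q : AddMonoidAlgebra A (Fin n →₀ ℕ) => γ j * q) := by
  classical
  have hγcomm : ∀ (j : Fin s) (z : AddMonoidAlgebra A (Fin n →₀ ℕ)), Commute (γ j) z := by
    intro j z
    rw [hγ j]
    refine Commute.sum_left _ _ _ fun i hi => Commute.mul_left ?_ (Commute.pow_left ?_ i)
    · exact Lem63.commute_single (fun b => (Semigroup.mem_center_iff.mp
        (hm j i (Nat.lt_succ_iff.mp (Finset.mem_range.mp hi))) b).symm) z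
    · exact hf j ▸ Lem63.commute_f z
  have hpair : ∀ j k, j ≠ k → ∀ x, γ j ∣ γ k * x → γ j ∣ x :=
    fun j k hjk x h => Lem63.pair_dvd a hindep d m hm hlead f hf γ hγ j k hjk x h
  have hdvd_mem : ∀ (l : List (Fin s)) (j : Fin s), j ∈ l → γ j ∣ (l.map γ).prod := by
    intro l
    induction l with
    | nil => intro j h; simp at h
    | cons b l ih =>
      intro j hj
      rw [List.map_cons, List.prod_cons]
      rcases List.mem_cons.mp hj with h | h
      · exact h ▸ dvd_mul_right _ _
      · obtain ⟨c, hc⟩ := ih j h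
        exact ⟨γ b * c, by rw [hc, ← mul_assoc, (hγcomm b (γ j)).eq, mul_assoc]⟩
  have hmain : ∀ (l : List (Fin s)), l.Nodup → ∀ x, (∀ j ∈ l, γ j ∣ x) →
      (l.map γ).prod ∣ x := by
    intro l
    induction l with
    | nil => intro _ x _; simpa using one_dvd x
    | cons b l ih =>
      intro hnd x hx
      obtain ⟨y, hy⟩ := hx b List.mem_cons_self
      have hrest : ∀ j ∈ l, γ j ∣ y := by
        intro j hj
        have hne : j ≠ b := fun h => (List.nodup_cons.mp hnd).1 (h ▸ hj)
        exact hpair j b hne y (hy ▸ hx j (List.mem_cons_of_mem b hj))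
      obtain ⟨z, hz⟩ := ih (List.nodup_cons.mp hnd).2 y hrest
      exact ⟨z, by rw [List.map_cons, List.prod_cons, hy, hz, mul_assoc]⟩
  ext x
  simp only [Set.mem_range, Set.mem_iInter]
  constructor
  · rintro ⟨q, rfl⟩ j
    obtain ⟨c, hc⟩ := hdvd_mem (List.finRange s) j (List.mem_finRange j)
    refine ⟨c * q, ?_⟩
    rw [show List.ofFn γ = (List.finRange s).map γ from List.ofFn_eq_map, hc, mul_assoc]
  · intro hx
    obtain ⟨z, hz⟩ := hmain (List.finRange s) (List.nodup_finRange s) x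
      (fun j _ => ⟨(hx j).choose, ((hx j).choose_spec).symm⟩)
    exact ⟨z, by rw [List.ofFn_eq_map, ← hz]⟩
end
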